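/- Let G be a Polish group and A ⊆ G a universally measurable subset which is not right Haar null. Then for every open neighbourhood W of the identity there are finitely many h₁, …, hₙ ∈ W such that h₁AA⁻¹h₁⁻¹ ∪ … ∪ hₙAA⁻¹hₙ⁻¹ is a neighbourhood of the identity. -/

import Mathlib

open MeasureTheory Set Pointwise

def UniversallyMeasurable {G : Type*} [MeasurableSpace G] (A : Set G) : Prop :=
  ∀ μ : Measure G, IsProbabilityMeasure μ → NullMeasurableSet A μ

def RightHaarNull {G : Type*} [Group G] [MeasurableSpace G] (A : Set G) : Prop :=
  ∃ μ : Measure G, IsProbabilityMeasure μ ∧ ∀ z : G, μ ((fun a => a * z) '' A) = 0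

namespace CLAux
local instance : TopologicalSpace (ZMod 2) := ⊥
local instance : DiscreteTopology (ZMod 2) := ⟨rfl⟩
local instance : IsTopologicalAddGroup (ZMod 2) :=
  { continuous_add := continuous_of_discreteTopology
    continuous_neg := continuous_of_discreteTopology }

abbrev X : Type := ℕ → ZMod 2

noncomputable local instance : MeasurableSpace X := borel X
local instance : BorelSpace X := ⟨rfl⟩

noncomputable def nu : Measure X := Measure.addHaarMeasure ⊤

instance : IsProbabilityMeasure nu := by
  constructor
  have := Measure.addHaarMeasure_self (K₀ := (⊤ : TopologicalSpace.PositiveCompacts X))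
  rwa [TopologicalSpace.PositiveCompacts.coe_top] at this

instance : Measure.IsAddLeftInvariant nu := Measure.isAddLeftInvariant_addHaarMeasure _

/-- cylinder set -/
def cyl (s : List (ZMod 2)) : Set X := {x | ∀ i, i < s.length → x i = s.getD i 0}

lemma isOpen_cyl (s : List (ZMod 2)) : IsOpen (cyl s) := by
  have : cyl s = ⋂ i ∈ Finset.range s.length, (fun x : X => x i) ⁻¹' {s.getD i 0} := by
    ext x; simp [cyl, Set.mem_iInter]
  rw [this]
  exact isOpen_biInter_finset fun i _ =>
    (isOpen_discrete _).preimage (continuous_apply i)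

lemma isClosed_cyl (s : List (ZMod 2)) : IsClosed (cyl s) := by
  have : cyl s = ⋂ i, ⋂ (_ : i < s.length), (fun x : X => x i) ⁻¹' {s.getD i 0} := by
    ext x; simp [cyl, Set.mem_iInter]
  rw [this]
  exact isClosed_iInter fun i => isClosed_iInter fun _ =>
    (isClosed_discrete _).preimage (continuous_apply i)

lemma mem_cyl_append {s : List (ZMod 2)} {b : ZMod 2} {x : X} :
    x ∈ cyl (s ++ [b]) ↔ x ∈ cyl s ∧ x s.length = b := by
  constructor
  · intro h
    refine ⟨fun i hi => ?_, ?_⟩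
    · have := h i (by simp; omega)
      rwa [List.getD_append _ _ _ _ hi] at this
    · have := h s.length (by simp)
      rwa [List.getD_eq_getElem?_getD, List.getElem?_append_right le_rfl, Nat.sub_self] at this
  · rintro ⟨h1, h2⟩ i hi
    simp only [List.length_append, List.length_singleton] at hi
    rcases Nat.lt_or_ge i s.length with h | h
    · rw [List.getD_append _ _ _ _ h]; exact h1 i h
    · have : i = s.length := by omega
      subst this
      rwa [List.getD_eq_getElem?_getD, List.getElem?_append_right le_rfl, Nat.sub_self]

lemma cyl_eq_union (s : List (ZMod 2)) :
    cyl s = cyl (s ++ [0]) ∪ cyl (s ++ [1]) := by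
  ext x
  simp only [Set.mem_union, mem_cyl_append]
  constructor
  · intro h
    rcases (by decide : ∀ a : ZMod 2, a = 0 ∨ a = 1) (x s.length) with h' | h'
    · exact Or.inl ⟨h, h'⟩
    · exact Or.inr ⟨h, h'⟩
  · rintro (⟨h, _⟩ | ⟨h, _⟩) <;> exact h

lemma disjoint_cyl01 (s : List (ZMod 2)) :
    Disjoint (cyl (s ++ [0])) (cyl (s ++ [1])) := by
  rw [Set.disjoint_left]
  rintro x h1 h2
  have e1 := (mem_cyl_append.1 h1).2
  have e2 := (mem_cyl_append.1 h2).2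
  rw [e1] at e2; exact absurd e2 (by decide)


lemma cyl_subset_of_prefix {s t : List (ZMod 2)} (h : s <+: t) : cyl t ⊆ cyl s := by
  obtain ⟨u, rfl⟩ := h
  intro x hx i hi
  have := hx i (by simp; omega)
  rwa [List.getD_append _ _ _ _ hi] at this

lemma prefix_of_not_disjoint {s t : List (ZMod 2)} (hlen : s.length ≤ t.length)
    (h : ¬ Disjoint (cyl s) (cyl t)) : s <+: t := by
  rw [Set.not_disjoint_iff] at h
  obtain ⟨x, hxs, hxt⟩ := h
  rw [List.prefix_iff_eq_take]
  apply List.ext_getElem (by simp [Nat.min_eq_left hlen])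
  intro i h1 h2
  rw [List.getElem_take]
  have e1 := hxs i h1
  have e2 := hxt i (by omega)
  rw [List.getD_eq_getElem _ _ h1] at e1
  rw [List.getD_eq_getElem _ _ (by omega)] at e2
  rw [← e1, ← e2]

/-- prefix of x as a list -/
def pre (x : X) (n : ℕ) : List (ZMod 2) := List.ofFn (fun i : Fin n => x i)

@[simp] lemma length_pre (x : X) (n : ℕ) : (pre x n).length = n := by simp [pre]

lemma getD_pre (x : X) {n i : ℕ} (h : i < n) : (pre x n).getD i 0 = x i := by
  rw [List.getD_eq_getElem _ _ (by simpa using h)]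
  simp [pre]

lemma mem_cyl_pre (x : X) (n : ℕ) : x ∈ cyl (pre x n) := by
  intro i hi
  rw [getD_pre x (by simpa using hi)]

lemma take_pre (x : X) (m n : ℕ) (h : m ≤ n) : (pre x n).take m = pre x m := by
  apply List.ext_getElem (by simp [Nat.min_eq_left h])
  intro i h1 h2
  simp_all [pre, List.getElem_take]

lemma exists_cyl_pre_subset {U : Set X} (hU : IsOpen U) {x : X} (hx : x ∈ U) :
    ∃ n, cyl (pre x n) ⊆ U := by
  obtain ⟨I, u, hu, hIu⟩ := isOpen_pi_iff.1 hU x hx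
  rcases I.bddAbove with ⟨N, hN⟩
  refine ⟨N + 1, fun y hy => hIu ?_⟩
  intro i hi
  have hiN : i < N + 1 := Nat.lt_succ_of_le (hN hi)
  have := hy i (by simpa using hiN)
  rw [getD_pre x hiN] at this
  rw [this]
  exact (hu i hi).2

lemma open_decomp {U : Set X} (hU : IsOpen U) :
    ∃ D : Set (List (ZMod 2)), D.Countable ∧ (U = ⋃ s ∈ D, cyl s) ∧
      D.Pairwise (fun s t => Disjoint (cyl s) (cyl t)) := by
  refine ⟨{s | cyl s ⊆ U ∧ ∀ t, t <+: s → t ≠ s → ¬ cyl t ⊆ U}, Set.to_countable _, ?_, ?_⟩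
  · apply Set.Subset.antisymm
    · intro x hx
      have hex : ∃ n, cyl (pre x n) ⊆ U := exists_cyl_pre_subset hU hx
      classical
      let n := Nat.find hex
      refine Set.mem_biUnion (show pre x n ∈ {s | cyl s ⊆ U ∧ ∀ t, t <+: s → t ≠ s → ¬ cyl t ⊆ U} from ⟨Nat.find_spec hex, ?_⟩) (mem_cyl_pre x n)
      intro t ht hne hcyl
      have hlt : t.length < n := by
        have hle : t.length ≤ n := by
          have := ht.length_le; simpa using this
        rcases Nat.lt_or_ge t.length n with h | h
        · exact h
        · exfalso; apply hne
          have h4 : t.length = n := le_antisymm hle h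
          rw [List.prefix_iff_eq_take.1 ht, h4, take_pre x n n le_rfl]
      have ht' : cyl (pre x t.length) ⊆ U := by
        have he : pre x t.length = t := by
          conv_lhs => rw [← take_pre x t.length n (le_of_lt hlt)]
          exact (List.prefix_iff_eq_take.1 ht).symm
        rw [he]; exact hcyl
      exact Nat.find_min hex hlt ht'
    · intro x hx
      simp only [Set.mem_iUnion] at hx
      obtain ⟨s, hs, hxs⟩ := hx
      exact hs.1 hxs
  · rintro s ⟨hs1, hs2⟩ t ⟨ht1, ht2⟩ hne
    by_contra hdis
    rcases Nat.le_or_le s.length t.length with h | h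
    · have := prefix_of_not_disjoint h hdis
      rcases eq_or_ne s t with rfl | hne'
      · exact hne rfl
      · exact ht2 s this hne' hs1
    · have := prefix_of_not_disjoint h (fun d => hdis d.symm)
      rcases eq_or_ne t s with rfl | hne'
      · exact hne rfl
      · exact hs2 t this hne' ht1

end CLAux

namespace CLAux
local instance : TopologicalSpace (ZMod 2) := ⊥
local instance : DiscreteTopology (ZMod 2) := ⟨rfl⟩
local instance : IsTopologicalAddGroup (ZMod 2) :=
  { continuous_add := continuous_of_discreteTopology
    continuous_neg := continuous_of_discreteTopology }
noncomputable local instance : MeasurableSpace X := borel X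
local instance : BorelSpace X := ⟨rfl⟩

lemma measurableSet_cyl (s : List (ZMod 2)) : MeasurableSet (cyl s) :=
  (isOpen_cyl s).measurableSet

lemma nu_flip_preimage (n : ℕ) (T : Set X) :
    nu ((fun x : X => x + Pi.single n 1) ⁻¹' T) = nu T := by
  have : (fun x : X => x + Pi.single n 1) = (fun x => Pi.single n 1 + x) := by
    funext x; exact add_comm _ _
  rw [this, measure_preimage_add]

lemma flip_mem_cyl {s : List (ZMod 2)} {x : X} (hx : x ∈ cyl (s ++ [0])) :
    x + Pi.single s.length 1 ∈ cyl (s ++ [1]) := by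
  rw [mem_cyl_append] at hx ⊢
  refine ⟨fun i hi => ?_, ?_⟩
  · have hne : i ≠ s.length := by omega
    simp only [Pi.add_apply, Pi.single_eq_of_ne hne, add_zero]
    exact hx.1 i hi
  · simp [hx.2]

lemma flip_preimage_cyl (s : List (ZMod 2)) :
    (fun x : X => x + Pi.single s.length 1) ⁻¹' cyl (s ++ [1]) = cyl (s ++ [0]) := by
  ext x
  simp only [Set.mem_preimage, mem_cyl_append]
  constructor
  · rintro ⟨h1, h2⟩
    refine ⟨fun i hi => ?_, ?_⟩
    · have hne : i ≠ s.length := by omega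
      have := h1 i hi
      simpa [Pi.single_eq_of_ne hne] using this
    · have h2' : x s.length + 1 = 0 + 1 := by
        rw [zero_add]; simpa using h2
      exact (add_left_inj 1).1 h2'
  · rintro ⟨h1, h2⟩
    exact mem_cyl_append.1 (flip_mem_cyl (mem_cyl_append.2 ⟨h1, h2⟩))

set_option maxHeartbeats 2000000 in
theorem flip_null {S : Set X} (hS : NullMeasurableSet S nu)
    (hf : ∀ x ∈ S, ∀ n : ℕ, x + Pi.single n 1 ∉ S) : nu S = 0 := by
  by_contra h0
  have hpos : 0 < nu S := pos_iff_ne_zero.2 h0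
  have hfin : nu S ≠ ⊤ := measure_ne_top nu S
  have hlt : nu S < 2 * nu S := by
    rw [two_mul]
    exact ENNReal.lt_add_right hfin h0
  obtain ⟨U, hSU, hUo, hUlt⟩ := Set.exists_isOpen_lt_of_lt S (2 * nu S) hlt
  obtain ⟨D, hDc, hDU, hDd⟩ := open_decomp hUo
  -- per cylinder bound
  have key : ∀ s : List (ZMod 2), nu (S ∩ cyl s) ≤ nu (cyl (s ++ [1])) := by
    intro s
    have h1 : nu (S ∩ cyl (s ++ [0])) ≤ nu (cyl (s ++ [1]) \ S) := by
      have hsub : S ∩ cyl (s ++ [0]) ⊆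
          (fun x : X => x + Pi.single s.length 1) ⁻¹' (cyl (s ++ [1]) \ S) := by
        rintro x ⟨hxS, hxc⟩
        exact ⟨flip_mem_cyl hxc, hf x hxS s.length⟩
      calc nu (S ∩ cyl (s ++ [0])) ≤
          nu ((fun x : X => x + Pi.single s.length 1) ⁻¹' (cyl (s ++ [1]) \ S)) :=
            measure_mono hsub
        _ = nu (cyl (s ++ [1]) \ S) := nu_flip_preimage _ _
    have h2 : nu (cyl (s ++ [1]) ∩ S) + nu (cyl (s ++ [1]) \ S) = nu (cyl (s ++ [1])) :=
      measure_inter_add_diff₀ _ hS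
    have h3 : nu (S ∩ cyl s) = nu (S ∩ cyl (s ++ [0])) + nu (S ∩ cyl (s ++ [1])) := by
      have e1 : S ∩ cyl s ∩ cyl (s ++ [0]) = S ∩ cyl (s ++ [0]) := by
        rw [Set.inter_assoc]
        congr 1
        rw [Set.inter_eq_right.2]
        exact cyl_subset_of_prefix ⟨[0], rfl⟩
      have e2 : (S ∩ cyl s) \ cyl (s ++ [0]) = S ∩ cyl (s ++ [1]) := by
        ext x
        constructor
        · rintro ⟨⟨hxS, hxc⟩, hxn⟩
          rw [cyl_eq_union] at hxc
          rcases hxc with h | h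
          · exact absurd h hxn
          · exact ⟨hxS, h⟩
        · rintro ⟨hxS, hxc⟩
          refine ⟨⟨hxS, ?_⟩, ?_⟩
          · rw [cyl_eq_union]; exact Or.inr hxc
          · intro hc
            exact (disjoint_cyl01 s).le_bot ⟨hc, hxc⟩
        
      rw [← measure_inter_add_diff (S ∩ cyl s) (measurableSet_cyl (s ++ [0])), e1, e2]
    calc nu (S ∩ cyl s) = nu (S ∩ cyl (s ++ [0])) + nu (S ∩ cyl (s ++ [1])) := h3
      _ ≤ nu (cyl (s ++ [1]) \ S) + nu (cyl (s ++ [1]) ∩ S) := by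
          refine add_le_add h1 (le_of_eq ?_)
          rw [Set.inter_comm]
      _ = nu (cyl (s ++ [1])) := by rw [add_comm]; exact h2
  have hcylsum : ∀ s : List (ZMod 2), nu (cyl s) = 2 * nu (cyl (s ++ [1])) := by
    intro s
    have e0 : nu (cyl (s ++ [0])) = nu (cyl (s ++ [1])) := by
      rw [← flip_preimage_cyl s, nu_flip_preimage]
    rw [cyl_eq_union s, measure_union (disjoint_cyl01 s) (measurableSet_cyl _), e0, two_mul]
  -- sum up
  have hSle : nu S ≤ ∑' s : D, nu (S ∩ cyl s) := by
    have hE : S = ⋃ s ∈ D, S ∩ cyl s := by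
      ext x; constructor
      · intro hx
        have hxU : x ∈ U := hSU hx
        rw [hDU] at hxU
        simp only [Set.mem_iUnion] at hxU ⊢
        obtain ⟨s, hs, hxs⟩ := hxU
        exact ⟨s, hs, hx, hxs⟩
      · intro hx
        simp only [Set.mem_iUnion] at hx
        obtain ⟨s, hs, hxS, _⟩ := hx
        exact hxS
    have hle := measure_biUnion_le nu hDc (fun s => S ∩ cyl s)
    rw [← hE] at hle
    exact hle
  have hUsum : nu U = ∑' s : D, nu (cyl s) := by
    rw [hDU]
    exact measure_biUnion hDc hDd fun s _ => measurableSet_cyl s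
  have hT : (∑' s : D, nu (S ∩ cyl s)) ≤ ∑' s : D, nu (cyl (s.1 ++ [1])) :=
    ENNReal.tsum_le_tsum fun s => key s.1
  have hT2 : (∑' s : D, nu (cyl s)) = 2 * ∑' s : D, nu (cyl (s.1 ++ [1])) := by
    rw [← ENNReal.tsum_mul_left]
    exact tsum_congr fun s => hcylsum s.1
  have h2S : 2 * nu S ≤ nu U := by
    rw [hUsum, hT2]
    exact mul_le_mul_right (hSle.trans hT) 2
  exact absurd (lt_of_le_of_lt h2S hUlt) (lt_irrefl _)
end CLAux


section ChainPart
variable {G : Type*} [Group G] [TopologicalSpace G] [IsTopologicalGroup G]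

lemma exists_sym_step {V : Set G} (hVo : IsOpen V) (hV1 : (1:G) ∈ V) :
    ∃ V' : Set G, (IsOpen V' ∧ (1:G) ∈ V' ∧ V'⁻¹ = V') ∧ V' * V' ⊆ V := by
  obtain ⟨V0, hV0o, hV01, hV0m⟩ := exists_open_nhds_one_mul_subset (hVo.mem_nhds hV1)
  refine ⟨V0 ∩ V0⁻¹, ⟨hV0o.inter hV0o.inv, ⟨hV01, by simpa using hV01⟩, ?_⟩, ?_⟩
  · ext y
    simp only [Set.mem_inv, Set.mem_inter_iff]
    constructor
    · rintro ⟨h1, h2⟩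
      exact ⟨by simpa using h2, by simpa using h1⟩
    · rintro ⟨h1, h2⟩
      exact ⟨by simpa using h2, by simpa using h1⟩
  · intro y hy
    rw [Set.mem_mul] at hy
    obtain ⟨a, ha, b, hb, rfl⟩ := hy
    exact hV0m (Set.mul_mem_mul ha.1 hb.1)

lemma exists_chain {W : Set G} (hWo : IsOpen W) (hW1 : (1:G) ∈ W) :
    ∃ U : ℕ → Set G, (∀ n, IsOpen (U n)) ∧ (∀ n, (1:G) ∈ U n) ∧ (∀ n, (U n)⁻¹ = U n) ∧
      (∀ n, U (n+1) * U (n+1) ⊆ U n) ∧ U 0 ⊆ W := by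
  have step := fun (V : Set G) (hVo : IsOpen V) (hV1 : (1:G) ∈ V) => exists_sym_step hVo hV1
  choose F hF1 hF2 using step
  let T := {V : Set G // IsOpen V ∧ (1:G) ∈ V ∧ V⁻¹ = V}
  let next : T → T := fun p => ⟨F p.1 p.2.1 p.2.2.1, hF1 p.1 p.2.1 p.2.2.1⟩
  let c0 : T := ⟨F W hWo hW1, hF1 W hWo hW1⟩
  let c : ℕ → T := fun n => next^[n] c0
  have hc : ∀ n, c (n+1) = next (c n) := fun n => Function.iterate_succ_apply' next n c0
  refine ⟨fun n => (c n).1, fun n => (c n).2.1, fun n => (c n).2.2.1, fun n => (c n).2.2.2, ?_, ?_⟩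
  · intro n
    show (c (n+1)).1 * (c (n+1)).1 ⊆ (c n).1
    rw [hc n]
    exact hF2 (c n).1 (c n).2.1 (c n).2.2.1
  · intro y hy
    apply hF2 W hWo hW1
    have h1 : (1:G) ∈ (c 0).1 := (c 0).2.2.1
    exact (by simpa using Set.mul_mem_mul hy h1 : y ∈ _)
end ChainPart


namespace CLAux

/-- ordered product of `g k` for `k ∈ [n, m)` with `x k = 1` -/
noncomputable def spg {G : Type*} [Group G] (g : ℕ → G) (x : ℕ → ZMod 2) (n m : ℕ) : G :=
  ((List.range' n (m - n)).map (fun k => if x k = 1 then g k else 1)).prod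

variable {G : Type*} [Group G] (g : ℕ → G) (x : ℕ → ZMod 2)

lemma spg_of_le {n m : ℕ} (h : m ≤ n) : spg g x n m = 1 := by
  simp [spg, Nat.sub_eq_zero_of_le h]

lemma spg_succ_right {n m : ℕ} (h : n ≤ m) :
    spg g x n (m + 1) = spg g x n m * (if x m = 1 then g m else 1) := by
  have h1 : m + 1 - n = (m - n) + 1 := by omega
  rw [spg, h1, List.range'_concat, List.map_append, List.prod_append]
  have h2 : n + 1 * (m - n) = m := by omega
  rw [h2]
  simp [spg]

lemma spg_succ_left {n m : ℕ} (h : n < m) :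
    spg g x n m = (if x n = 1 then g n else 1) * spg g x (n + 1) m := by
  have h1 : m - n = (m - (n+1)) + 1 := by omega
  rw [spg, h1, List.range'_succ, List.map_cons, List.prod_cons]
  rfl

lemma spg_congr {g' : ℕ → G} {x' : ℕ → ZMod 2} {n m : ℕ}
    (h : ∀ k, n ≤ k → k < m → (if x k = 1 then g k else 1) = (if x' k = 1 then g' k else 1)) :
    spg g x n m = spg g' x' n m := by
  unfold spg
  congr 1
  apply List.map_congr_left
  intro k hk
  rcases Nat.le_or_le m n with hle | hle
  · simp [Nat.sub_eq_zero_of_le hle] at hk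
  · rw [List.mem_range'_1] at hk
    exact h k hk.1 (by omega)

lemma spg_split {n k m : ℕ} (h1 : n ≤ k) (h2 : k ≤ m) :
    spg g x n m = spg g x n k * spg g x k m := by
  induction m with
  | zero =>
    have : k = 0 := by omega
    subst this
    have : n = 0 := by omega
    subst this
    simp [spg]
  | succ m ih =>
    rcases Nat.lt_or_ge k (m+1) with h | h
    · have hkm : k ≤ m := by omega
      rw [spg_succ_right g x (by omega : n ≤ m), ih hkm, spg_succ_right g x (by omega : k ≤ m),
        mul_assoc]
    · have : k = m + 1 := by omega
      subst this
      rw [spg_of_le g x le_rfl, mul_one]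

lemma spg_eq_one {n m : ℕ} (h : ∀ k, n ≤ k → k < m → x k ≠ 1) : spg g x n m = 1 := by
  have : spg g x n m = spg g (fun _ => 0) n m := by
    apply spg_congr
    intro k hk1 hk2
    rw [if_neg (h k hk1 hk2), if_neg (by decide)]
  rw [this]
  unfold spg
  apply List.prod_eq_one
  intro a ha
  simp only [List.mem_map] at ha
  obtain ⟨k, _, rfl⟩ := ha
  rw [if_neg (by decide)]

/-- membership of partial products in the neighborhood chain -/
lemma spg_mem {U : ℕ → Set G} (hU1 : ∀ n, (1:G) ∈ U n)
    (hUm : ∀ n, U (n+1) * U (n+1) ⊆ U n)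
    {n m : ℕ} (hg : ∀ k, n ≤ k → k < m → g k ∈ U (k+1)) :
    spg g x n m ∈ U n := by
  suffices H : ∀ d n, m - n = d → (∀ k, n ≤ k → k < m → g k ∈ U (k+1)) → spg g x n m ∈ U n from
    H (m - n) n rfl hg
  intro d
  induction d with
  | zero =>
    intro n hd _
    rw [spg_of_le g x (by omega)]
    exact hU1 n
  | succ d ih =>
    intro n hd hg
    have hnm : n < m := by omega
    rw [spg_succ_left g x hnm]
    apply hUm n
    apply Set.mul_mem_mul
    · split
      · exact hg n le_rfl hnm
      · exact hU1 (n+1)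
    · exact ih (n+1) (by omega) (fun k hk1 hk2 => hg k (by omega) hk2)


section ExistsG
variable {G : Type*} [Group G] [MetricSpace G] [IsTopologicalGroup G]

/-- the one-step condition: `t` is a valid choice for `g m` given earlier values `gg` -/
def Cprop (A : Set G) (U : ℕ → Set G) (gg : ℕ → G) (m : ℕ) (t : G) : Prop :=
  t ∈ U (m+1) ∧
  (∀ x : ℕ → ZMod 2, dist (spg gg x 0 m) (spg gg x 0 m * t) ≤ (1/2 : ℝ)^m) ∧
  (∀ x : ℕ → ZMod 2, t ∉ (fun y => (spg gg x 0 m)⁻¹ * y * (spg gg x 0 m)) '' (A * A⁻¹))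

lemma Cprop_congr {A : Set G} {U : ℕ → Set G} {gg gg' : ℕ → G} {m : ℕ} {t : G}
    (h : ∀ k, k < m → gg k = gg' k) (hc : Cprop A U gg m t) : Cprop A U gg' m t := by
  have hs : ∀ x : ℕ → ZMod 2, spg gg' x 0 m = spg gg x 0 m := fun x =>
    spg_congr gg' x (fun k hk1 hk2 => by rw [h k hk2])
  refine ⟨hc.1, fun x => ?_, fun x => ?_⟩
  · rw [hs x]; exact hc.2.1 x
  · rw [hs x]; exact hc.2.2 x

lemma exists_g (A : Set G) {W : Set G}
    (hcon : ∀ (n : ℕ) (h : Fin n → G), (∀ i, h i ∈ W) →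
      (⋃ i : Fin n, (fun x => h i * x * (h i)⁻¹) '' (A * A⁻¹)) ∉ nhds (1:G))
    (U : ℕ → Set G) (hUo : ∀ n, IsOpen (U n)) (hU1 : ∀ n, (1:G) ∈ U n)
    (hUs : ∀ n, (U n)⁻¹ = U n) (hUm : ∀ n, U (n+1) * U (n+1) ⊆ U n) (hUW : U 0 ⊆ W) :
    ∃ g : ℕ → G, ∀ m : ℕ, Cprop A U g m (g m) := by
  classical
  -- Step 1: one-step existence
  have key : ∀ (gg : ℕ → G) (m : ℕ), (∀ k, k < m → gg k ∈ U (k+1)) →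
      ∃ t : G, Cprop A U gg m t := by
    intro gg m hgg
    set R : (Fin m → ZMod 2) → G := fun b =>
      spg gg (fun k => if h : k < m then b ⟨k, h⟩ else 0) 0 m with hR
    have hRx : ∀ x : ℕ → ZMod 2, spg gg x 0 m = R (fun k : Fin m => x k) := by
      intro x
      apply spg_congr
      intro k hk1 hk2
      rw [dif_pos hk2]
    have hRW : ∀ b, R b ∈ U 0 := fun b =>
      spg_mem _ _ hU1 hUm (fun k _ hk2 => hgg k hk2)
    have hRWi : ∀ b, (R b)⁻¹ ∈ W := by
      intro b
      apply hUW
      rw [← hUs 0]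
      exact Set.inv_mem_inv.2 (hRW b)
    -- the good neighborhood
    set V : Set G := U (m+1) ∩ ⋂ b : Fin m → ZMod 2,
      (fun t => R b * t) ⁻¹' Metric.ball (R b) ((1/2:ℝ)^m) with hV
    have hVo : IsOpen V := by
      apply (hUo _).inter
      apply isOpen_iInter_of_finite
      intro b
      exact Metric.isOpen_ball.preimage (continuous_const.mul continuous_id)
    have hV1 : (1:G) ∈ V := by
      refine ⟨hU1 _, ?_⟩
      apply Set.mem_iInter.2
      intro b
      simp only [Set.mem_preimage, mul_one, Metric.mem_ball, dist_self]
      positivity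
    -- the forbidden set
    have hBnm : (⋃ b : Fin m → ZMod 2,
        (fun y => (R b)⁻¹ * y * ((R b)⁻¹)⁻¹) '' (A * A⁻¹)) ∉ nhds (1:G) := by
      set e := Fintype.equivFin (Fin m → ZMod 2)
      have := hcon (Fintype.card (Fin m → ZMod 2)) (fun i => (R (e.symm i))⁻¹)
        (fun i => hRWi (e.symm i))
      intro hmem
      apply this
      have : (⋃ b : Fin m → ZMod 2, (fun y => (R b)⁻¹ * y * ((R b)⁻¹)⁻¹) '' (A * A⁻¹))
          = ⋃ i, (fun y => (R (e.symm i))⁻¹ * y * ((R (e.symm i))⁻¹)⁻¹) '' (A * A⁻¹) := by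
        ext y
        simp only [Set.mem_iUnion]
        constructor
        · rintro ⟨b, hb⟩
          exact ⟨e b, by simpa using hb⟩
        · rintro ⟨i, hi⟩
          exact ⟨e.symm i, hi⟩
      rwa [this] at hmem
    have hex : ∃ t ∈ V, t ∉ ⋃ b : Fin m → ZMod 2,
        (fun y => (R b)⁻¹ * y * ((R b)⁻¹)⁻¹) '' (A * A⁻¹) := by
      by_contra hc
      push_neg at hc
      exact hBnm (Filter.mem_of_superset (hVo.mem_nhds hV1) hc)
    obtain ⟨t, htV, htB⟩ := hex
    refine ⟨t, htV.1, ?_, ?_⟩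
    · intro x
      have := Set.mem_iInter.1 htV.2 (fun k : Fin m => x k)
      simp only [Set.mem_preimage, Metric.mem_ball] at this
      rw [hRx x]
      rw [dist_comm] at this
      exact le_of_lt this
    · intro x hx
      apply htB
      apply Set.mem_iUnion.2
      refine ⟨fun k : Fin m => x k, ?_⟩
      obtain ⟨y, hy, hyt⟩ := hx
      exact ⟨y, hy, by rw [← hRx x]; simpa using hyt⟩
  -- Step 2: recursion
  have hdec : ∀ (gg : ℕ → G) (m : ℕ), Decidable (∀ k, k < m → gg k ∈ U (k+1)) :=
    fun gg m => Classical.propDecidable _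
  let pick : (ℕ → G) → ℕ → G := fun gg m =>
    if h : (∀ k, k < m → gg k ∈ U (k+1)) then Classical.choose (key gg m h) else 1
  let ext : (ℕ → G) × ℕ → (ℕ → G) × ℕ := fun p =>
    (Function.update p.1 p.2 (pick p.1 p.2), p.2 + 1)
  let a : ℕ → (ℕ → G) := fun m => (ext^[m] (fun _ => 1, 0)).1
  have hsnd : ∀ m, (ext^[m] (fun _ => 1, 0)).2 = m := by
    intro m
    induction m with
    | zero => rfl
    | succ m ih =>
      rw [Function.iterate_succ_apply']
      show (ext^[m] (fun _ => 1, 0)).2 + 1 = m + 1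
      rw [ih]
  have ha : ∀ m, a (m+1) = Function.update (a m) m (pick (a m) m) := by
    intro m
    show (ext^[m+1] (fun _ => 1, 0)).1 = _
    rw [Function.iterate_succ_apply']
    show Function.update (a m) ((ext^[m] (fun _ => 1, 0)).2) (pick (a m) _) = _
    rw [hsnd m]
  -- invariant
  have hinv : ∀ m, ∀ k, k < m → Cprop A U (a m) k ((a m) k) := by
    intro m
    induction m with
    | zero => omega
    | succ m ih =>
      have hmem : ∀ k, k < m → (a m) k ∈ U (k+1) := fun k hk => (ih k hk).1
      have hpick : pick (a m) m = Classical.choose (key (a m) m hmem) := by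
        show dite _ _ _ = _
        rw [dif_pos hmem]
      have hCm : Cprop A U (a m) m (pick (a m) m) := by
        rw [hpick]
        exact Classical.choose_spec (key (a m) m hmem)
      intro k hk
      have hagree : ∀ j, j < m → (a m) j = (a (m+1)) j := by
        intro j hj
        rw [ha m, Function.update_of_ne (by omega)]
      rcases Nat.lt_or_ge k m with h | h
      · have := Cprop_congr (fun j hj => hagree j (by omega)) (ih k h)
        have hval : (a (m+1)) k = (a m) k := (hagree k h).symm
        rwa [hval]
      · have hkm : k = m := by omega
        subst hkm
        have hC : Cprop A U (a (k+1)) k (pick (a k) k) :=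
          Cprop_congr (fun j hj => hagree j hj) hCm
        have hval : (a (k+1)) k = pick (a k) k := by
          rw [ha k, Function.update_self]
        rwa [← hval] at hC
  -- extract g
  refine ⟨fun m => a (m+1) m, ?_⟩
  have hstab : ∀ m k, k < m → a m k = a (k+1) k := by
    intro m
    induction m with
    | zero => omega
    | succ m ih =>
      intro k hk
      rcases Nat.lt_or_ge k m with h | h
      · rw [ha m, Function.update_of_ne (by omega)]
        exact ih k h
      · have : k = m := by omega
        subst this
        rfl
  intro m
  have h1 := hinv (m+1) m (by omega)
  have h2 : ∀ j, j < m → a (m+1) j = a (j+1) j := fun j hj => hstab (m+1) j (by omega)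
  exact Cprop_congr h2 h1
end ExistsG

end CLAux

namespace CLAux
local instance : TopologicalSpace (ZMod 2) := ⊥
local instance : DiscreteTopology (ZMod 2) := ⟨rfl⟩
local instance : IsTopologicalAddGroup (ZMod 2) :=
  { continuous_add := continuous_of_discreteTopology
    continuous_neg := continuous_of_discreteTopology }
noncomputable local instance : MeasurableSpace X := borel X
local instance : BorelSpace X := ⟨rfl⟩

theorem main {G : Type*} [Group G] [TopologicalSpace G] [IsTopologicalGroup G] [PolishSpace G]
    [MeasurableSpace G] [BorelSpace G] (A : Set G)
    (hA : UniversallyMeasurable A) (hnull : ¬ RightHaarNull A) :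
    ∀ W : Set G, IsOpen W → (1 : G) ∈ W →
      ∃ (n : ℕ) (h : Fin n → G), (∀ i, h i ∈ W) ∧
        (⋃ i : Fin n, (fun x => h i * x * (h i)⁻¹) '' (A * A⁻¹)) ∈ nhds (1 : G) := by
  intro W hWo hW1
  by_contra hcon'
  push_neg at hcon'
  have hcon : ∀ (n : ℕ) (h : Fin n → G), (∀ i, h i ∈ W) →
      (⋃ i : Fin n, (fun x => h i * x * (h i)⁻¹) '' (A * A⁻¹)) ∉ nhds (1:G) := by
    intro n h hW
    exact hcon' n h hW
  letI := TopologicalSpace.upgradeIsCompletelyMetrizable G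
  obtain ⟨U, hUo, hU1, hUs, hUm, hUW⟩ := exists_chain hWo hW1
  obtain ⟨g, hg⟩ := exists_g A hcon U hUo hU1 hUs hUm hUW
  -- successive distances
  have hdist : ∀ (x : ℕ → ZMod 2) (n m : ℕ),
      dist (spg g x n m) (spg g x n (m+1)) ≤ (1/2:ℝ)^m := by
    intro x n m
    rcases Nat.lt_or_ge m n with h | h
    · rw [spg_of_le g x (by omega), spg_of_le g x (by omega), dist_self]
      positivity
    · rw [spg_succ_right g x h]
      by_cases hx : x m = 1
      · rw [if_pos hx]
        -- rewrite the window product as a full product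
        set x' : ℕ → ZMod 2 := fun k => if k < n then 0 else x k with hx'
        have he : spg g x n m = spg g x' 0 m := by
          rw [spg_split g x' (Nat.zero_le n) h]
          have h1 : spg g x' 0 n = 1 := by
            apply spg_eq_one
            intro k _ hk2
            simp only [hx', if_pos hk2]
            decide
          have h2 : spg g x' n m = spg g x n m := by
            apply spg_congr
            intro k hk1 _
            simp only [hx', if_neg (by omega : ¬ k < n)]
          rw [h1, h2, one_mul]
        rw [he]
        have := (hg m).2.1 x'
        simpa using this
      · rw [if_neg hx, mul_one, dist_self]
        positivity
  have hcauchy : ∀ (x : ℕ → ZMod 2) (n : ℕ), CauchySeq (fun m => spg g x n m) := by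
    intro x n
    exact cauchySeq_of_dist_le_of_summable _ (fun m => hdist x n m) summable_geometric_two
  have hLex : ∀ (x : ℕ → ZMod 2) (n : ℕ), ∃ l : G,
      Filter.Tendsto (fun m => spg g x n m) Filter.atTop (nhds l) :=
    fun x n => cauchySeq_tendsto_of_complete (hcauchy x n)
  choose L hL using hLex
  -- splitting of the limit
  have hsplit : ∀ (x : ℕ → ZMod 2) (n : ℕ), L x 0 = spg g x 0 n * L x n := by
    intro x n
    have h1 : Filter.Tendsto (fun m => spg g x 0 n * spg g x n m) Filter.atTop
        (nhds (spg g x 0 n * L x n)) := ((hL x n).const_mul _)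
    have h2 : Filter.Tendsto (fun m => spg g x 0 n * spg g x n m) Filter.atTop
        (nhds (L x 0)) := by
      apply (hL x 0).congr'
      filter_upwards [Filter.eventually_ge_atTop n] with m hm
      exact spg_split g x (Nat.zero_le n) hm
    exact tendsto_nhds_unique h2 h1
  have htail : ∀ (x y : ℕ → ZMod 2) (n : ℕ), (∀ k, n ≤ k → x k = y k) → L x n = L y n := by
    intro x y n hxy
    apply tendsto_nhds_unique (hL x n)
    have : ∀ m, spg g x n m = spg g y n m := fun m =>
      spg_congr g x (fun k hk1 _ => by rw [hxy k hk1])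
    exact (hL y n).congr fun m => (this m).symm
  -- the key conjugation identity
  have hkey : ∀ (x : ℕ → ZMod 2) (n : ℕ), x n = 1 →
      L x 0 * (L (x + Pi.single n 1) 0)⁻¹ = spg g x 0 n * g n * (spg g x 0 n)⁻¹ := by
    intro x n hx1
    set y : ℕ → ZMod 2 := x + Pi.single n 1 with hy
    have hyk : ∀ k, k ≠ n → y k = x k := by
      intro k hk
      simp [hy, Pi.single_eq_of_ne hk]
    have hyn : y n = 0 := by
      have : y n = x n + 1 := by simp [hy]
      rw [this, hx1]
      decide
    have hx0 : L x 0 = spg g x 0 n * g n * L x (n+1) := by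
      rw [hsplit x (n+1), spg_succ_right g x (Nat.zero_le n), if_pos hx1]
    have hy0 : L y 0 = spg g x 0 n * L x (n+1) := by
      rw [hsplit y (n+1), spg_succ_right g y (Nat.zero_le n), if_neg (by rw [hyn]; decide)]
      rw [mul_one]
      have h1 : spg g y 0 n = spg g x 0 n :=
        spg_congr g y (fun k _ hk2 => by rw [hyk k (by omega)])
      have h2 : L y (n+1) = L x (n+1) :=
        htail y x (n+1) (fun k hk => hyk k (by omega))
      rw [h1, h2]
    rw [hx0, hy0]
    group
  -- measurability of the limit map
  have hcont : ∀ m, Continuous (fun x : ℕ → ZMod 2 => spg g x 0 m) := by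
    intro m
    induction m with
    | zero =>
      have : (fun x : ℕ → ZMod 2 => spg g x 0 0) = fun _ => (1:G) :=
        funext fun x => spg_of_le g x le_rfl
      rw [this]; exact continuous_const
    | succ m ih =>
      have : (fun x : ℕ → ZMod 2 => spg g x 0 (m+1)) =
          fun x => spg g x 0 m * ((fun v : ZMod 2 => if v = 1 then g m else 1) (x m)) := by
        funext x
        rw [spg_succ_right g x (Nat.zero_le m)]
      rw [this]
      exact ih.mul ((continuous_of_discreteTopology : Continuous (fun v : ZMod 2 => if v = 1 then g m else 1)).comp (continuous_apply m))
  set φ : (ℕ → ZMod 2) → G := fun x => L x 0 with hφ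
  have hφm : Measurable φ := by
    apply measurable_of_tendsto_metrizable (fun m => (hcont m).measurable)
    rw [tendsto_pi_nhds]
    intro x
    exact hL x 0
  -- the pushforward measure
  set Mu : Measure G := nu.map φ with hMu
  have hφae : AEMeasurable φ nu := hφm.aemeasurable
  haveI : IsProbabilityMeasure Mu := Measure.isProbabilityMeasure_map hφae
  obtain ⟨z, hz⟩ : ∃ z : G, Mu ((fun a => a * z) '' A) ≠ 0 := by
    by_contra hc
    push_neg at hc
    exact hnull ⟨Mu, inferInstance, hc⟩
  -- null measurability of the translate
  have hAz : (fun a => a * z) '' A = (fun b => b * z⁻¹) ⁻¹' A := by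
    ext b
    simp only [Set.mem_image, Set.mem_preimage]
    constructor
    · rintro ⟨a, ha, rfl⟩
      simpa using ha
    · intro hb
      exact ⟨b * z⁻¹, hb, by group⟩
  have hmul : Measurable (fun b : G => b * z⁻¹) :=
    (continuous_id.mul continuous_const).measurable
  have hnmAz : NullMeasurableSet ((fun a => a * z) '' A) Mu := by
    rw [hAz]
    have hq : Measure.QuasiMeasurePreserving (fun b : G => b * z⁻¹) Mu
        (Mu.map (fun b : G => b * z⁻¹)) :=
      ⟨hmul, Measure.AbsolutelyContinuous.rfl⟩
    haveI : IsProbabilityMeasure (Mu.map (fun b : G => b * z⁻¹)) :=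
      Measure.isProbabilityMeasure_map hmul.aemeasurable
    exact (hA (Mu.map (fun b : G => b * z⁻¹)) inferInstance).preimage hq
  set S : Set (ℕ → ZMod 2) := φ ⁻¹' ((fun a => a * z) '' A) with hS
  have hSnu : nu S = Mu ((fun a => a * z) '' A) := by
    rw [hMu, Measure.map_apply₀ hφae hnmAz]
  have hSnm : NullMeasurableSet S nu := by
    have hq : Measure.QuasiMeasurePreserving φ nu Mu :=
      ⟨hφm, by rw [hMu]⟩
    exact hnmAz.preimage hq
  -- the flip condition
  have hflip : ∀ x ∈ S, ∀ n : ℕ, x + Pi.single n 1 ∉ S := by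
    have main : ∀ (u : ℕ → ZMod 2) (n : ℕ), u ∈ S → u + Pi.single n 1 ∈ S → u n = 1 → False := by
      intro u n hu huy hu1
      obtain ⟨a, ha, haz⟩ := hu
      obtain ⟨b, hb, hbz⟩ := huy
      have hk := hkey u n hu1
      have he : L u 0 * (L (u + Pi.single n 1) 0)⁻¹ = a * b⁻¹ := by
        have h1 : L u 0 = a * z := haz.symm
        have h2 : L (u + Pi.single n 1) 0 = b * z := hbz.symm
        rw [h1, h2]
        group
      have hgn : g n = (spg g u 0 n)⁻¹ * (a * b⁻¹) * spg g u 0 n := by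
        rw [← he, hk]
        group
      exact (hg n).2.2 u ⟨a * b⁻¹, Set.mul_mem_mul ha (Set.inv_mem_inv.2 hb), hgn.symm⟩
    intro x hx n hy
    have hinv2 : x + Pi.single n 1 + Pi.single n 1 = x := by
      funext k
      by_cases hk : k = n
      · subst hk
        simp only [Pi.add_apply, Pi.single_eq_same]
        have : (1:ZMod 2) + 1 = 0 := by decide
        rw [add_assoc, this, add_zero]
      · simp [Pi.single_eq_of_ne hk]
    rcases (by decide : ∀ a : ZMod 2, a = 0 ∨ a = 1) (x n) with h | h
    · -- then (x + e) n = 1, apply main to x + e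
      have h1 : ((x + Pi.single n 1 : ℕ → ZMod 2)) n = 1 := by
        have : ((x + Pi.single n 1 : ℕ → ZMod 2)) n = x n + 1 := by
          simp [Pi.single_eq_same]
        rw [this, h]
        decide
      exact main (x + Pi.single n 1) n hy (by rwa [hinv2]) h1
    · exact main x n hx hy h
  have : nu S = 0 := flip_null hSnm hflip
  rw [hSnu] at this
  exact hz this

end CLAux

theorem christensen_local
    {G : Type*} [Group G] [TopologicalSpace G] [IsTopologicalGroup G] [PolishSpace G]
    [MeasurableSpace G] [BorelSpace G] (A : Set G)
    (hA : UniversallyMeasurable A) (hnull : ¬ RightHaarNull A) :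
    ∀ W : Set G, IsOpen W → (1 : G) ∈ W →
      ∃ (n : ℕ) (h : Fin n → G), (∀ i, h i ∈ W) ∧
        (⋃ i : Fin n, (fun x => h i * x * (h i)⁻¹) '' (A * A⁻¹)) ∈ nhds (1 : G) := by
  exact CLAux.main A hA hnull
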